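/- Let K be a symmetric positive definite N×N matrix and [Z Q] an N×N orthogonal matrix partitioned into blocks Z (N×k) and Q (N×(N-k)). Then (Z^T K Z)⁻¹ = Z^T K⁻¹ Z - Z^T K⁻¹ Q (Q^T K⁻¹ Q)⁻¹ Q^T K⁻¹ Z. -/

import Mathlib

open Matrix

lemma posDef_conj_aux {N m : ℕ} {M : Matrix (Fin N) (Fin N) ℝ} (hM : M.PosDef)
    (Q : Matrix (Fin N) (Fin m) ℝ) (hQ : Qᵀ * Q = 1) : (Qᵀ * M * Q).PosDef := by
  refine posDef_iff_dotProduct_mulVec.mpr ⟨?_, ?_⟩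
  · have h := Matrix.isHermitian_conjTranspose_mul_mul Q hM.1
    simpa [Matrix.conjTranspose_eq_transpose_of_trivial] using h
  · intro x hx
    have hxn : Q *ᵥ x ≠ 0 := by
      intro h0
      apply hx
      have : Qᵀ *ᵥ (Q *ᵥ x) = x := by
        rw [Matrix.mulVec_mulVec, hQ, Matrix.one_mulVec]
      rw [h0, Matrix.mulVec_zero] at this
      exact this.symm
    have h := hM.dotProduct_mulVec_pos hxn
    have e : star x ⬝ᵥ (Qᵀ * M * Q) *ᵥ x = star (Q *ᵥ x) ⬝ᵥ M *ᵥ (Q *ᵥ x) := by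
      rw [star_trivial, star_trivial, ← Matrix.mulVec_mulVec, ← Matrix.mulVec_mulVec,
        Matrix.dotProduct_mulVec x Qᵀ, Matrix.vecMul_transpose]
    rw [e]
    exact h

/-- Inverse of a projected SPD matrix expressed through the Schur complement of the
inverse of the full matrix in the orthogonal basis `[Z Q]`. -/
theorem inv_projected_schur {N k l : ℕ} (K : Matrix (Fin N) (Fin N) ℝ)
    (hK : K.PosDef)
    (Z : Matrix (Fin N) (Fin k) ℝ) (Q : Matrix (Fin N) (Fin l) ℝ)
    (hZ : Zᵀ * Z = 1) (hQ : Qᵀ * Q = 1) (hZQ : Zᵀ * Q = 0)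
    (hsum : Z * Zᵀ + Q * Qᵀ = 1) :
    (Zᵀ * K * Z)⁻¹ =
      Zᵀ * K⁻¹ * Z - Zᵀ * K⁻¹ * Q * (Qᵀ * K⁻¹ * Q)⁻¹ * Qᵀ * K⁻¹ * Z := by
  have hKdet : IsUnit K.det := hK.det_pos.ne'.isUnit
  have hKK : K * K⁻¹ = 1 := Matrix.mul_nonsing_inv _ hKdet
  have hC : (Qᵀ * K⁻¹ * Q).PosDef := posDef_conj_aux hK.inv Q hQ
  have hCC : (Qᵀ * K⁻¹ * Q) * (Qᵀ * K⁻¹ * Q)⁻¹ = 1 :=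
    Matrix.mul_nonsing_inv _ hC.det_pos.ne'.isUnit
  have e1 : Z * Zᵀ = 1 - Q * Qᵀ := eq_sub_of_add_eq hsum
  have hmain : Zᵀ * K * Z * Zᵀ * K⁻¹ = Zᵀ - Zᵀ * K * Q * Qᵀ * K⁻¹ := by
    calc Zᵀ * K * Z * Zᵀ * K⁻¹ = Zᵀ * K * (Z * Zᵀ) * K⁻¹ := by
          simp only [Matrix.mul_assoc]
      _ = Zᵀ * (K * K⁻¹) - Zᵀ * K * Q * Qᵀ * K⁻¹ := by
          rw [e1]; simp only [Matrix.mul_sub, Matrix.sub_mul, Matrix.mul_one, Matrix.mul_assoc]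
      _ = Zᵀ - Zᵀ * K * Q * Qᵀ * K⁻¹ := by rw [hKK, Matrix.mul_one]
  refine (Matrix.inv_eq_right_inv ?_)
  have expand : Zᵀ * K * Z *
      (Zᵀ * K⁻¹ * Z - Zᵀ * K⁻¹ * Q * (Qᵀ * K⁻¹ * Q)⁻¹ * Qᵀ * K⁻¹ * Z)
      = (Zᵀ * K * Z * Zᵀ * K⁻¹) * Z
        - ((Zᵀ * K * Z * Zᵀ * K⁻¹) * Q) * ((Qᵀ * K⁻¹ * Q)⁻¹ * (Qᵀ * K⁻¹ * Z)) := by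
    simp only [Matrix.mul_sub, Matrix.mul_assoc]
  rw [expand, hmain]
  have h2 : (Zᵀ - Zᵀ * K * Q * Qᵀ * K⁻¹) * Q = - (Zᵀ * K * Q * (Qᵀ * K⁻¹ * Q)) := by
    rw [Matrix.sub_mul, hZQ]
    simp only [Matrix.mul_assoc, zero_sub]
  rw [h2]
  have h3 : -(Zᵀ * K * Q * (Qᵀ * K⁻¹ * Q)) * ((Qᵀ * K⁻¹ * Q)⁻¹ * (Qᵀ * K⁻¹ * Z))
      = -(Zᵀ * K * Q * (Qᵀ * K⁻¹ * Z)) := by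
    rw [Matrix.neg_mul, neg_inj, Matrix.mul_assoc (Zᵀ * K * Q), ← Matrix.mul_assoc (Qᵀ * K⁻¹ * Q),
      hCC, Matrix.one_mul]
  rw [h3, Matrix.sub_mul, hZ]
  simp only [Matrix.mul_assoc]
  abel
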